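/- Let S = I_{nK} − ρᵀ ⊗ W with W ∈ ℝ^{n×n} having zero diagonal, Σ_e ∈ ℝ^{K×K} symmetric positive definite, and Ω = Sᵀ(Σ_e^{-1} ⊗ I_n)S. Then the diagonal of Ω equals the diagonal of (Σ_e^{-1} ⊗ I_n) + (ρ Σ_e^{-1} ρᵀ) ⊗ (Wᵀ W) restricted to diagonal entries; that is, diag(Ω) = diag(Σ_e^{-1}) ⊗ I_n + diag(ρ Σ_e^{-1} ρᵀ) ⊗ diag(Wᵀ W). -/
import Mathlib


open Matrix
open scoped Kronecker

noncomputable section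

theorem diagonal_of_Omega_for_zero_diagonal_W
    (n K : ℕ) (W : Matrix (Fin n) (Fin n) ℝ) (hW : ∀ i, W i i = 0)
    (ρ : Matrix (Fin K) (Fin K) ℝ)
    (Se : Matrix (Fin K) (Fin K) ℝ) (hSe : Se.PosDef) :
    ∀ p : Fin K × Fin n,
      (((1 : Matrix (Fin K × Fin n) (Fin K × Fin n) ℝ) - ρ.transpose ⊗ₖ W).transpose *
        (Se⁻¹ ⊗ₖ (1 : Matrix (Fin n) (Fin n) ℝ)) *
        ((1 : Matrix (Fin K × Fin n) (Fin K × Fin n) ℝ) - ρ.transpose ⊗ₖ W)) p p =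
      ((Se⁻¹ ⊗ₖ (1 : Matrix (Fin n) (Fin n) ℝ)) +
        ((ρ * Se⁻¹ * ρ.transpose) ⊗ₖ (W.transpose * W))) p p := by
  intro p
  set A : Matrix (Fin K × Fin n) (Fin K × Fin n) ℝ := ρ.transpose ⊗ₖ W with hA
  set M : Matrix (Fin K × Fin n) (Fin K × Fin n) ℝ :=
    Se⁻¹ ⊗ₖ (1 : Matrix (Fin n) (Fin n) ℝ) with hM
  have hexp : ((1 - A).transpose * M * (1 - A)) =
      M - A.transpose * M - M * A + A.transpose * M * A := by
    rw [transpose_sub, transpose_one]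
    noncomm_ring
  have hAMA : A.transpose * M * A = (ρ * Se⁻¹ * ρ.transpose) ⊗ₖ (W.transpose * W) := by
    rw [hA, hM, ← Matrix.kroneckerMap_transpose, transpose_transpose,
      ← Matrix.mul_kronecker_mul, ← Matrix.mul_kronecker_mul]
    simp
  have h1 : (A.transpose * M) p p = 0 := by
    simp only [Matrix.mul_apply, transpose_apply, hA, hM, kroneckerMap_apply,
      Fintype.sum_prod_type]
    apply Finset.sum_eq_zero
    intro i _
    apply Finset.sum_eq_zero
    intro j _
    rcases eq_or_ne j p.2 with h | h
    · simp [h, hW]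
    · simp [Matrix.one_apply_ne h]
  have h2 : (M * A) p p = 0 := by
    simp only [Matrix.mul_apply, hA, hM, kroneckerMap_apply, Fintype.sum_prod_type]
    apply Finset.sum_eq_zero
    intro i _
    apply Finset.sum_eq_zero
    intro j _
    rcases eq_or_ne p.2 j with h | h
    · simp [← h, hW]
    · simp [Matrix.one_apply_ne h]
  rw [hexp, hAMA]
  simp [Matrix.sub_apply, Matrix.add_apply, h1, h2]
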